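/- Let q ∈ ℂ with q ≠ 0 and q² ≠ -1. Let S be the Solution III flip: S^{ij}_{kl} = (q²+1)⁻¹ times the array with nonzero entries S^{11}_{11} = 2q, S^{11}_{22} = 1-q², S^{12}_{12} = 1-q², S^{12}_{21} = 2q, S^{21}_{12} = 2q, S^{21}_{21} = q²-1, S^{22}_{11} = q²-1, S^{22}_{22} = 2q; let g^{ij} = δ^{ij} (the 2×2 identity), and let P be the wedge projector (nonzero entries P^{12}_{12} = 1/2, P^{12}_{21} = -q/2, P^{21}_{12} = -q⁻¹/2, P^{21}_{21} = 1/2). Then: (a) P^{ij}_{lm} + Σ_{h,k} S^{ij}_{hk} P^{hk}_{lm} = 0 for all i,j,l,m; (b) Σ_{l,m} P^{ij}_{lm} g^{lm} = 0 for all i,j; (c) Σ_{m,n,r} S^{im}_{ln} g^{nr} S^{jk}_{mr} = g^{ij} δ^k_l for all i,j,k,l; (d) if moreover |q| = 1, then Σ_{k,l} conj(S^{ji}_{kl}) S^{lk}_{mn} = δ^i_m δ^j_n for all i,j,m,n. -/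

import Mathlib

open Finset

/-- The Solution III flip: `(q²+1)⁻¹` times the array with nonzero entries
`S^{11}_{11} = 2q`, `S^{11}_{22} = 1-q²`, `S^{12}_{12} = 1-q²`,
`S^{12}_{21} = 2q`, `S^{21}_{12} = 2q`, `S^{21}_{21} = q²-1`,
`S^{22}_{11} = q²-1`, `S^{22}_{22} = 2q`. -/
noncomputable def solIIIS (q : ℂ) : Fin 2 → Fin 2 → Fin 2 → Fin 2 → ℂ :=
  fun i j k l =>
    (q ^ 2 + 1)⁻¹ *
      (if i = 0 ∧ j = 0 ∧ k = 0 ∧ l = 0 then 2 * q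
      else if i = 0 ∧ j = 0 ∧ k = 1 ∧ l = 1 then 1 - q ^ 2
      else if i = 0 ∧ j = 1 ∧ k = 0 ∧ l = 1 then 1 - q ^ 2
      else if i = 0 ∧ j = 1 ∧ k = 1 ∧ l = 0 then 2 * q
      else if i = 1 ∧ j = 0 ∧ k = 0 ∧ l = 1 then 2 * q
      else if i = 1 ∧ j = 0 ∧ k = 1 ∧ l = 0 then q ^ 2 - 1
      else if i = 1 ∧ j = 1 ∧ k = 0 ∧ l = 0 then q ^ 2 - 1
      else if i = 1 ∧ j = 1 ∧ k = 1 ∧ l = 1 then 2 * q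
      else 0)

/-- The wedge-product projector of the Wess–Zumino calculus on the real quantum
plane: nonzero entries `P^{12}_{12} = 1/2`, `P^{12}_{21} = -q/2`,
`P^{21}_{12} = -q⁻¹/2`, `P^{21}_{21} = 1/2`. -/
noncomputable def wedgeP (q : ℂ) : Fin 2 → Fin 2 → Fin 2 → Fin 2 → ℂ :=
  fun i j k l =>
    if i = 0 ∧ j = 1 ∧ k = 0 ∧ l = 1 then 1 / 2
    else if i = 0 ∧ j = 1 ∧ k = 1 ∧ l = 0 then -q / 2
    else if i = 1 ∧ j = 0 ∧ k = 0 ∧ l = 1 then -q⁻¹ / 2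
    else if i = 1 ∧ j = 0 ∧ k = 1 ∧ l = 0 then 1 / 2
    else 0

/-- The Solution III metric: the 2×2 identity, `g^{ij} = δ^{ij}`. -/
noncomputable def solIIIg : Fin 2 → Fin 2 → ℂ :=
  fun i j => if i = j then 1 else 0

set_option maxHeartbeats 1600000 in
/-- Solution III: (a) the consistency condition `π∘(σ+1) = 0`, (b) the
symmetry condition `g∘π = 0`, (c) metric compatibility, and (d) (for
`|q| = 1`) the flip reality condition all hold. -/
theorem solIII (q : ℂ) (hq : q ≠ 0) (hq2 : q ^ 2 ≠ -1) :
    (∀ i j l m : Fin 2,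
        wedgeP q i j l m
          + ∑ h : Fin 2, ∑ k : Fin 2, solIIIS q i j h k * wedgeP q h k l m = 0)
    ∧ (∀ i j : Fin 2,
        (∑ l : Fin 2, ∑ m : Fin 2, wedgeP q i j l m * solIIIg l m) = 0)
    ∧ (∀ i j k l : Fin 2,
        (∑ m : Fin 2, ∑ n : Fin 2, ∑ r : Fin 2,
            solIIIS q i m l n * solIIIg n r * solIIIS q j k m r)
          = solIIIg i j * (if k = l then 1 else 0))
    ∧ (‖q‖ = 1 →
        ∀ i j m n : Fin 2,
          (∑ k : Fin 2, ∑ l : Fin 2,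
              (starRingEnd ℂ) (solIIIS q j i k l) * solIIIS q l k m n)
            = (if i = m then 1 else 0) * (if j = n then 1 else 0)) := by

  have h1 : q ^ 2 + 1 ≠ 0 := fun h => hq2 (by linear_combination h)
  refine ⟨?_, ?_, ?_, ?_⟩
  · intro i j l m
    fin_cases i <;> fin_cases j <;> fin_cases l <;> fin_cases m <;>
      simp [solIIIS, wedgeP, Fin.sum_univ_two] <;> field_simp <;> ring
  · intro i j
    fin_cases i <;> fin_cases j <;>
      simp [wedgeP, solIIIg, Fin.sum_univ_two]
  · intro i j k l
    fin_cases i <;> fin_cases j <;> fin_cases k <;> fin_cases l <;>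
      simp [solIIIS, solIIIg, Fin.sum_univ_two] <;> field_simp <;> ring
  · intro habs i j m n
    have hc : (starRingEnd ℂ) q = q⁻¹ := (Complex.inv_eq_conj habs).symm
    have hc2 : (starRingEnd ℂ) (q ^ 2 + 1) = (q ^ 2 + 1) / q ^ 2 := by
      simp [map_add, map_pow, hc]; field_simp; ring
    fin_cases i <;> fin_cases j <;> fin_cases m <;> fin_cases n <;>
      simp [solIIIS, Fin.sum_univ_two, map_mul, map_sub, map_add, map_pow,
        map_inv₀, map_ofNat, hc, hc2] <;> field_simp [hq, h1] <;> ring
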